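/- There exists a constant c > 0 such that for all sufficiently large n, all k with 100·√n ≤ k ≤ n/2, and all integers ℓ with 1 ≤ ℓ ≤ c·n/k, with probability at least 0.99 over H drawn from B(k, n, 1/2) there exists a real symmetric positive semidefinite matrix X of size (k+n)×(k+n), with rows and columns indexed by U ⊔ V where U is the set of k left vertices and V the set of n right vertices of H, satisfying: 0 ≤ X(i,j) ≤ 1 for all indices i, j; ∑_{u∈U} X(u,u) = ℓ; ∑_{v∈V} X(v,v) = k − ℓ; ∑_{u∈U, v∈V} X(u,v) = ℓ·(k−ℓ); and X(u,v) = X(v,u) = 0 for every pair u ∈ U, v ∈ V that is not an edge of H. -/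

import Mathlib

open MeasureTheory

/-- The random bipartite graph model `B(k, m, p)`: left vertex set `Fin k`, right vertex
set `Fin m`, each of the `k·m` edges present independently with probability `p`
(`true` means present). -/
noncomputable def bipartiteER (k m : ℕ) (p : ENNReal) (hp : p ≤ 1) :
    Measure (Fin k × Fin m → Bool) :=
  Measure.pi fun _ : Fin k × Fin m => (PMF.bernoulli p.toNNReal (by simpa using ENNReal.toNNReal_mono ENNReal.one_ne_top hp)).toMeasure

open ProbabilityTheory Matrix Set

section auxlemmas

variable {ι : Type*} [Fintype ι] [DecidableEq ι] {α : ι → Type*} [∀ i, MeasurableSpace (α i)]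
  (μ : ∀ i, Measure (α i)) [∀ i, IsProbabilityMeasure (μ i)]


variable {ι : Type*} [Fintype ι] [DecidableEq ι] {α : ι → Type*} [∀ i, MeasurableSpace (α i)]
  (μ : ∀ i, Measure (α i)) [∀ i, IsProbabilityMeasure (μ i)]

lemma aux_pi_eval (a : ι) (s : Set (α a)) :
    Measure.pi μ ((fun ω => ω a) ⁻¹' s) = μ a s := by
  have h : ((fun ω : ∀ i, α i => ω a) ⁻¹' s)
      = Set.pi Set.univ (Function.update (fun i => Set.univ) a s) := Set.eval_preimage
  rw [h, Measure.pi_pi]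
  rw [show Finset.univ.prod (fun i => μ i (Function.update (fun i => Set.univ) a s i))
      = Finset.univ.prod (fun i => μ i (Function.update (fun i => Set.univ) a s i)) from rfl]
  rw [← Finset.prod_subset (Finset.subset_univ {a}) (fun i _ hi => ?_), Finset.prod_singleton,
    Function.update_self]
  rw [Function.update_of_ne (by simpa using hi)]
  simp

lemma aux_indep_eval {a b : ι} (hab : a ≠ b) :
    IndepFun (fun ω : ∀ i, α i => ω a) (fun ω => ω b) (Measure.pi μ) := by
  rw [indepFun_iff_measure_inter_preimage_eq_mul]
  intro s t _ _
  rw [aux_pi_eval μ a s, aux_pi_eval μ b t]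
  have h1 : ((fun ω : ∀ i, α i => ω a) ⁻¹' s)
      = Set.pi Set.univ (Function.update (fun i => Set.univ) a s) := Set.eval_preimage
  have h2 : ((fun ω : ∀ i, α i => ω b) ⁻¹' t)
      = Set.pi Set.univ (Function.update (fun i => Set.univ) b t) := Set.eval_preimage
  rw [h1, h2, ← Set.pi_inter_distrib]
  have h3 : (fun i => Function.update (fun i => Set.univ) a s i ∩
      Function.update (fun i => Set.univ) b t i)
      = Function.update (Function.update (fun i => (Set.univ : Set (α i))) a s) b t := by
    funext i
    by_cases hia : i = a
    · subst hia
      rw [Function.update_self, Function.update_of_ne hab, Function.update_of_ne hab,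
        Function.update_self]
      simp
    · by_cases hib : i = b
      · subst hib
        rw [Function.update_of_ne hia, Function.update_self, Function.update_self]
        simp
      · rw [Function.update_of_ne hia, Function.update_of_ne hib, Function.update_of_ne hib,
          Function.update_of_ne hia]
        simp
  rw [h3, Measure.pi_pi]
  rw [← Finset.prod_subset (Finset.subset_univ {a, b}) (fun i _ hi => ?_),
    Finset.prod_pair hab]
  · congr 1
    · rw [Function.update_of_ne hab, Function.update_self]
    · rw [Function.update_self]
  · simp only [Finset.mem_insert, Finset.mem_singleton, not_or] at hi
    rw [Function.update_of_ne hi.2, Function.update_of_ne hi.1]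
    simp

end auxlemmas

open ProbabilityTheory Matrix Set


lemma aux_cardS {k ℓ : ℕ} (hℓk : ℓ ≤ k) :
    (Finset.univ.filter (fun u : Fin k => (u : ℕ) < ℓ)).card = ℓ := by
  have h : Finset.univ.filter (fun u : Fin k => (u : ℕ) < ℓ)
      = Finset.univ.map (Fin.castLEOrderEmb hℓk).toEmbedding := by
    ext i
    simp only [Finset.mem_filter, Finset.mem_univ, true_and, Finset.mem_map,
      RelEmbedding.coe_toEmbedding, Fin.castLEOrderEmb_apply]
    constructor
    · intro hi; exact ⟨⟨i, hi⟩, rfl⟩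
    · rintro ⟨j, rfl⟩; exact j.isLt
  rw [h, Finset.card_map, Finset.card_univ, Fintype.card_fin]

lemma aux_sum_ind {k n : ℕ} (F' : Finset (Fin k × Fin n)) (c : ℝ) :
    ∑ p : Fin k × Fin n, (if p ∈ F' then c else 0) = (F'.card : ℝ) * c := by
  rw [Finset.sum_ite_mem, Finset.univ_inter, Finset.sum_const, nsmul_eq_mul]

lemma aux_construct (k n ℓ : ℕ) (hℓ : 1 ≤ ℓ) (hℓk : ℓ ≤ k) (H : Fin k × Fin n → Bool)
    (hcount : ℓ ^ 2 * (k - ℓ) ≤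
      (((Finset.univ.filter (fun u : Fin k => (u : ℕ) < ℓ)) ×ˢ Finset.univ).filter
        (fun e => H e = true)).card) :
    ∃ X : Matrix (Fin k ⊕ Fin n) (Fin k ⊕ Fin n) ℝ,
      X.PosSemidef ∧
      (∀ i j, 0 ≤ X i j ∧ X i j ≤ 1) ∧
      (∑ u : Fin k, X (.inl u) (.inl u)) = (ℓ : ℝ) ∧
      (∑ v : Fin n, X (.inr v) (.inr v)) = (k : ℝ) - ℓ ∧
      (∑ u : Fin k, ∑ v : Fin n, X (.inl u) (.inr v)) = (ℓ : ℝ) * ((k : ℝ) - ℓ) ∧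
      (∀ u v, H (u, v) = false →
        X (.inl u) (.inr v) = 0 ∧ X (.inr v) (.inl u) = 0) := by
  obtain ⟨F', hF'sub, hF'card⟩ := Finset.exists_subset_card_eq hcount
  have hF'mem : ∀ e ∈ F', H e = true ∧ (e.1 : ℕ) < ℓ := by
    intro e he
    have := hF'sub he
    simp only [Finset.mem_filter, Finset.mem_product, Finset.mem_univ, true_and, and_true]
      at this
    exact ⟨this.2, this.1⟩
  have hℓR : (0 : ℝ) < ℓ := by exact_mod_cast hℓ
  have hℓR1 : (1 : ℝ) ≤ ℓ := by exact_mod_cast hℓ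
  have hkℓcast : ((k - ℓ : ℕ) : ℝ) = (k : ℝ) - ℓ := Nat.cast_sub hℓk
  set A : Matrix (Fin k) (Fin k ⊕ Fin n) ℝ := Matrix.of fun w i =>
    Sum.elim (fun u : Fin k => if w = u ∧ (u : ℕ) < ℓ then (1 : ℝ) else 0)
      (fun v : Fin n => if (w, v) ∈ F' then (ℓ : ℝ)⁻¹ else 0) i with hA
  have hXij : ∀ i j, (Aᴴ * A) i j = ∑ w, A w i * A w j := by
    intro i j
    simp [Matrix.mul_apply, Matrix.conjTranspose_apply]
  have hAl : ∀ w u, A w (Sum.inl u) = if w = u ∧ (u : ℕ) < ℓ then (1 : ℝ) else 0 := by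
    intro w u; rfl
  have hAr : ∀ w v, A w (Sum.inr v) = if (w, v) ∈ F' then (ℓ : ℝ)⁻¹ else 0 := by
    intro w v; rfl
  have h_ll : ∀ u u', (Aᴴ * A) (Sum.inl u) (Sum.inl u')
      = if u = u' ∧ (u : ℕ) < ℓ then (1 : ℝ) else 0 := by
    intro u u'
    rw [hXij]
    rw [Finset.sum_eq_single_of_mem u (Finset.mem_univ u)]
    · rw [hAl, hAl]
      by_cases h1 : u = u'
      · subst h1; by_cases h2 : (u : ℕ) < ℓ <;> simp [h2]
      · simp [h1, Ne.symm h1]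
    · intro w _ hw
      rw [hAl]
      simp only [hw, false_and, if_false, zero_mul]
  have h_lr : ∀ u v, (Aᴴ * A) (Sum.inl u) (Sum.inr v)
      = if (u, v) ∈ F' then (ℓ : ℝ)⁻¹ else 0 := by
    intro u v
    rw [hXij]
    rw [Finset.sum_eq_single_of_mem u (Finset.mem_univ u)]
    · rw [hAl, hAr]
      by_cases h1 : (u, v) ∈ F'
      · have := (hF'mem _ h1).2
        simp only at this
        simp [h1, this]
      · simp [h1]
    · intro w _ hw
      rw [hAl]
      simp only [hw, false_and, if_false, zero_mul]
  have h_rl : ∀ v u, (Aᴴ * A) (Sum.inr v) (Sum.inl u) = (Aᴴ * A) (Sum.inl u) (Sum.inr v) := by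
    intro v u
    rw [hXij, hXij]
    exact Finset.sum_congr rfl fun w _ => mul_comm _ _
  have hA0 : ∀ w i, 0 ≤ A w i := by
    intro w i
    rcases i with u | v
    · rw [hAl]; split <;> norm_num
    · rw [hAr]; split <;> positivity
  have hnonneg : ∀ i j, 0 ≤ (Aᴴ * A) i j := by
    intro i j
    rw [hXij]
    exact Finset.sum_nonneg fun w _ => mul_nonneg (hA0 w i) (hA0 w j)
  have hinvle1 : (ℓ : ℝ)⁻¹ ≤ 1 := by
    rw [inv_le_one_iff₀]; right; exact hℓR1
  refine ⟨Aᴴ * A, Matrix.posSemidef_conjTranspose_mul_self A, ?_, ?_, ?_, ?_, ?_⟩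
  · -- bounds
    intro i j
    refine ⟨hnonneg i j, ?_⟩
    rcases i with u | v <;> rcases j with u' | v'
    · rw [h_ll]; split <;> norm_num
    · rw [h_lr]; split
      · exact hinvle1
      · norm_num
    · rw [h_rl, h_lr]; split
      · exact hinvle1
      · norm_num
    · rw [hXij]
      have hle : ∀ w : Fin k, A w (Sum.inr v) * A w (Sum.inr v')
          ≤ if (w : ℕ) < ℓ then (ℓ : ℝ)⁻¹ * (ℓ : ℝ)⁻¹ else 0 := by
        intro w
        rw [hAr, hAr]
        by_cases h1 : (w, v) ∈ F'
        · have hwℓ : (w : ℕ) < ℓ := (hF'mem _ h1).2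
          simp only [h1, if_true, hwℓ]
          apply mul_le_mul_of_nonneg_left _ (by positivity)
          split <;> [exact le_refl _; positivity]
        · simp only [h1, if_false, zero_mul]
          split <;> positivity
      refine le_trans (Finset.sum_le_sum fun w _ => hle w) ?_
      rw [← Finset.sum_filter, Finset.sum_const, aux_cardS hℓk, nsmul_eq_mul]
      have : (ℓ : ℝ) * ((ℓ : ℝ)⁻¹ * (ℓ : ℝ)⁻¹) = (ℓ : ℝ)⁻¹ := by
        field_simp
      rw [this]; exact hinvle1
  · -- left diagonal sum
    have : ∀ u : Fin k, (Aᴴ * A) (Sum.inl u) (Sum.inl u)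
        = if (u : ℕ) < ℓ then (1 : ℝ) else 0 := by
      intro u; rw [h_ll]; simp
    rw [Finset.sum_congr rfl fun u _ => this u, Finset.sum_boole, aux_cardS hℓk]
  · -- right diagonal sum
    have h1 : ∀ v : Fin n, (Aᴴ * A) (Sum.inr v) (Sum.inr v)
        = ∑ w : Fin k, (if (w, v) ∈ F' then (ℓ : ℝ)⁻¹ * (ℓ : ℝ)⁻¹ else 0) := by
      intro v
      rw [hXij]
      refine Finset.sum_congr rfl fun w _ => ?_
      rw [hAr]
      by_cases h : (w, v) ∈ F' <;> simp [h]
    rw [Finset.sum_congr rfl fun v _ => h1 v, Finset.sum_comm]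
    rw [show (∑ w : Fin k, ∑ v : Fin n, (if (w, v) ∈ F' then (ℓ : ℝ)⁻¹ * (ℓ : ℝ)⁻¹ else 0))
        = ∑ p : Fin k × Fin n, (if p ∈ F' then (ℓ : ℝ)⁻¹ * (ℓ : ℝ)⁻¹ else 0) by
      rw [← Finset.univ_product_univ, Finset.sum_product]]
    rw [aux_sum_ind, hF'card]
    push_cast [hkℓcast]
    field_simp
  · -- cross sum
    rw [Finset.sum_congr rfl fun u _ => Finset.sum_congr rfl fun v _ => h_lr u v]
    rw [show (∑ u : Fin k, ∑ v : Fin n, (if (u, v) ∈ F' then (ℓ : ℝ)⁻¹ else 0))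
        = ∑ p : Fin k × Fin n, (if p ∈ F' then (ℓ : ℝ)⁻¹ else 0) by
      rw [← Finset.univ_product_univ, Finset.sum_product]]
    rw [aux_sum_ind, hF'card]
    push_cast [hkℓcast]
    field_simp
  · -- non-edges
    intro u v huv
    have hnot : (u, v) ∉ F' := by
      intro hmem
      have := (hF'mem _ hmem).1
      rw [huv] at this
      exact Bool.false_ne_true this
    constructor
    · rw [h_lr]; simp [hnot]
    · rw [h_rl, h_lr]; simp [hnot]

lemma aux_prob (k n : ℕ) (F : Finset (Fin k × Fin n)) (m : ℕ)
    (hm : (m : ℝ) ≤ (F.card : ℝ) / 4) (hN : 400 ≤ F.card) :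
    ENNReal.ofReal 0.99 ≤ bipartiteER k n (1/2) (by norm_num)
      {H | m ≤ (F.filter fun e => H e = true).card} := by
  set μ := bipartiteER k n (1/2) (by norm_num) with hμ
  set ν := (PMF.bernoulli (1/2 : ENNReal).toNNReal (by simpa using ENNReal.toNNReal_mono ENNReal.one_ne_top (by norm_num : (1/2 : ENNReal) ≤ 1))).toMeasure with hν
  haveI : IsProbabilityMeasure ν := PMF.toMeasure.isProbabilityMeasure _
  haveI : IsProbabilityMeasure μ := by
    rw [hμ]; unfold bipartiteER; infer_instance
  have hνtrue : ν ({true} : Set Bool) = 1/2 := by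
    rw [hν, PMF.toMeasure_apply_singleton _ _ (measurableSet_singleton _)]
    rw [PMF.bernoulli_apply]
    exact ENNReal.coe_toNNReal (by norm_num)
  set X : (Fin k × Fin n) → (Fin k × Fin n → Bool) → ℝ :=
    fun e ω => if ω e then 1 else 0 with hX
  have hXmeas : ∀ e, Measurable (X e) := fun e =>
    (measurable_of_countable (fun b : Bool => if b then (1:ℝ) else 0)).comp
      (measurable_pi_apply e)
  have hXmem : ∀ e, MemLp (X e) 2 μ := fun e =>
    MemLp.of_bound (hXmeas e).aestronglyMeasurable 1
      (ae_of_all _ fun ω => by by_cases h : ω e <;> simp [hX, h])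
  have hEX : ∀ e, μ[X e] = 1/2 := by
    intro e
    have h1 : X e = Set.indicator ((fun ω : Fin k × Fin n → Bool => ω e) ⁻¹' {true})
        (fun _ => (1:ℝ)) := by
      funext ω
      by_cases h : ω e <;> simp [hX, h, Set.indicator]
    rw [h1, integral_indicator_const _
      ((measurableSet_singleton true).preimage (measurable_pi_apply e))]
    have : μ ((fun ω : Fin k × Fin n → Bool => ω e) ⁻¹' {true}) = 1/2 := by
      rw [hμ]; unfold bipartiteER
      exact (aux_pi_eval (fun _ : Fin k × Fin n => ν) e ({true} : Set Bool)).trans hνtrue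
    rw [measureReal_def, this]
    simp [ENNReal.toReal_div]
  have hVar : ∀ e, variance (X e) μ = 1/4 := by
    intro e
    rw [variance_eq_integral (hXmem e).aemeasurable]
    have h2 : ((X e - fun _ => μ[X e]) ^ (2:ℕ) : (Fin k × Fin n → Bool) → ℝ)
        = fun _ => 1/4 := by
      funext ω
      simp only [Pi.pow_apply, Pi.sub_apply, hEX e]
      by_cases h : ω e <;> simp [hX, h] <;> norm_num
    rw [show ∫ ω, (X e ω - μ[X e]) ^ 2 ∂μ
        = ∫ ω, ((X e - fun _ => μ[X e]) ^ (2:ℕ) : (Fin k × Fin n → Bool) → ℝ) ω ∂μ from rfl,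
      h2, integral_const]
    simp
  set T : (Fin k × Fin n → Bool) → ℝ := ∑ e ∈ F, X e with hT
  have hTmem : MemLp T 2 μ := memLp_finsetSum' F (fun e _ => hXmem e)
  have hTval : ∀ ω, T ω = ((F.filter fun e => ω e = true).card : ℝ) := by
    intro ω
    rw [hT, Finset.sum_apply]
    simp only [hX]
    rw [Finset.sum_boole]
  have hET : μ[T] = (F.card : ℝ) / 2 := by
    rw [hT]
    have : ∫ ω, (∑ e ∈ F, X e) ω ∂μ = ∫ ω, ∑ e ∈ F, X e ω ∂μ := by
      congr 1; funext ω; exact Finset.sum_apply ω F X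
    rw [this, integral_finset_sum _ (fun e _ => (hXmem e).integrable one_le_two)]
    simp only [hEX]
    rw [Finset.sum_const]
    simp; ring
  have hVarT : variance T μ = (F.card : ℝ) / 4 := by
    rw [hT, IndepFun.variance_sum (fun e _ => hXmem e) ?_]
    · simp only [hVar]; rw [Finset.sum_const]; simp; ring
    · intro e _ f _ hef
      exact (aux_indep_eval (fun _ : Fin k × Fin n => ν) hef).comp
        (measurable_of_countable (fun b : Bool => if b then (1:ℝ) else 0))
        (measurable_of_countable (fun b : Bool => if b then (1:ℝ) else 0))
  set N : ℝ := (F.card : ℝ) with hNdef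
  have hN400 : (400 : ℝ) ≤ N := by rw [hNdef]; exact_mod_cast hN
  have hNpos : 0 < N := lt_of_lt_of_le (by norm_num) hN400
  have hc : 0 < N / 4 := by linarith
  have hcheb := meas_ge_le_variance_div_sq (μ := μ) hTmem hc
  rw [hVarT] at hcheb
  have hq : (N / 4) / (N/4)^2 = 4 / N := by
    field_simp
  rw [hq] at hcheb
  set B := {ω : Fin k × Fin n → Bool | N / 4 ≤ |T ω - μ[T]|} with hB
  have hBmeas : MeasurableSet B := by
    have hTm : Measurable T := by
      have : T = fun ω => ∑ e ∈ F, X e ω := by funext ω; exact Finset.sum_apply ω F X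
      rw [this]; exact Finset.measurable_sum F (fun e _ => hXmeas e)
    exact measurableSet_le measurable_const ((hTm.sub measurable_const).abs)
  have hsub : Bᶜ ⊆ {H : Fin k × Fin n → Bool | m ≤ (F.filter fun e => H e = true).card} := by
    intro ω hω
    simp only [hB, Set.mem_compl_iff, Set.mem_setOf_eq, not_le] at hω
    have h1 : N / 4 < T ω := by
      rw [hET] at hω
      have := abs_lt.mp hω
      simp only [hNdef] at *
      linarith [this.1]
    rw [hTval ω] at h1
    have : (m : ℝ) < ((F.filter fun e => ω e = true).card : ℝ) := lt_of_le_of_lt hm h1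
    exact_mod_cast this.le
  calc ENNReal.ofReal 0.99 = 1 - ENNReal.ofReal 0.01 := by
        rw [show (1 : ENNReal) = ENNReal.ofReal 1 by simp, ← ENNReal.ofReal_sub _ (by norm_num)]
        norm_num
    _ ≤ 1 - μ B := by
        apply tsub_le_tsub_left
        refine le_trans hcheb ?_
        apply ENNReal.ofReal_le_ofReal
        rw [div_le_iff₀ hNpos]
        linarith
    _ = μ Bᶜ := by
        rw [measure_compl hBmeas (measure_ne_top μ B), measure_univ]
    _ ≤ _ := measure_mono hsub

/-- There is a constant `c > 0` such that for all sufficiently large `n`, all `k` with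
`100·√n ≤ k ≤ n/2` and all integers `1 ≤ ℓ ≤ c·n/k`, with probability at least `0.99`
over `H ∼ B(k, n, 1/2)`, the biclique SDP is feasible: there is a real PSD matrix `X`
indexed by `U ⊔ V` with `0 ≤ X(i,j) ≤ 1`, `∑_{u∈U} X(u,u) = ℓ`,
`∑_{v∈V} X(v,v) = k − ℓ`, `∑_{u∈U,v∈V} X(u,v) = ℓ·(k−ℓ)`, and `X(u,v) = X(v,u) = 0`
for every non-edge pair `u ∈ U, v ∈ V`. -/
theorem stmt_18 : ∃ c : ℝ, 0 < c ∧ ∃ n₀ : ℕ, ∀ n ≥ n₀, ∀ k ℓ : ℕ,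
    100 * Real.sqrt n ≤ k → (k : ℝ) ≤ (n : ℝ) / 2 → 1 ≤ ℓ → (ℓ : ℝ) ≤ c * n / k →
    ENNReal.ofReal 0.99 ≤
      bipartiteER k n (1/2) (by norm_num)
        {H | ∃ X : Matrix (Fin k ⊕ Fin n) (Fin k ⊕ Fin n) ℝ,
          X.PosSemidef ∧
          (∀ i j, 0 ≤ X i j ∧ X i j ≤ 1) ∧
          (∑ u : Fin k, X (.inl u) (.inl u)) = (ℓ : ℝ) ∧
          (∑ v : Fin n, X (.inr v) (.inr v)) = (k : ℝ) - ℓ ∧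
          (∑ u : Fin k, ∑ v : Fin n, X (.inl u) (.inr v)) = (ℓ : ℝ) * ((k : ℝ) - ℓ) ∧
          (∀ u v, H (u, v) = false →
            X (.inl u) (.inr v) = 0 ∧ X (.inr v) (.inl u) = 0)} := by
  refine ⟨1/4, by norm_num, 400, ?_⟩
  intro n hn k ℓ hk1 hk2 hℓ1 hℓ2
  have hn400 : (400 : ℝ) ≤ (n : ℝ) := by exact_mod_cast hn
  have hnpos : (0 : ℝ) < n := by linarith
  have hsqrt : (20 : ℝ) ≤ Real.sqrt n := by
    rw [show (20 : ℝ) = Real.sqrt 400 by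
      rw [show (400 : ℝ) = 20 ^ 2 by norm_num, Real.sqrt_sq (by norm_num)]]
    exact Real.sqrt_le_sqrt hn400
  have hkR : (2000 : ℝ) ≤ (k : ℝ) := by nlinarith
  have hkpos : (0 : ℝ) < k := by linarith
  have hsq : (n : ℝ) ≤ (k : ℝ) ^ 2 / 10000 := by
    have h1 : Real.sqrt n ≤ (k : ℝ) / 100 := by linarith
    have h2 : (n : ℝ) = Real.sqrt n ^ 2 := (Real.sq_sqrt hnpos.le).symm
    nlinarith [Real.sqrt_nonneg (n : ℝ)]
  have hℓkR : (ℓ : ℝ) * k ≤ (n : ℝ) / 4 := by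
    have := (le_div_iff₀ hkpos).mp hℓ2
    linarith
  have hℓ1R : (1 : ℝ) ≤ (ℓ : ℝ) := by exact_mod_cast hℓ1
  have hℓltk : ℓ < k := by
    have : (ℓ : ℝ) < (k : ℝ) := by nlinarith
    exact_mod_cast this
  have hℓk : ℓ ≤ k := hℓltk.le
  set S : Finset (Fin k) := Finset.univ.filter (fun u : Fin k => (u : ℕ) < ℓ) with hS
  set F : Finset (Fin k × Fin n) := S ×ˢ Finset.univ with hF
  have hcardS : S.card = ℓ := aux_cardS hℓk
  have hcardF : F.card = ℓ * n := by
    rw [hF, Finset.card_product, hcardS, Finset.card_univ, Fintype.card_fin]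
  set m : ℕ := ℓ ^ 2 * (k - ℓ) with hm
  have hmR : ((m : ℕ) : ℝ) ≤ (F.card : ℝ) / 4 := by
    rw [hcardF, hm]
    push_cast [Nat.cast_sub hℓk]
    have hkℓ : (k : ℝ) - ℓ ≤ k := by linarith
    have h0 : (0 : ℝ) ≤ (k : ℝ) - ℓ := by
      have : (ℓ : ℝ) ≤ k := by exact_mod_cast hℓk
      linarith
    nlinarith
  have hN : 400 ≤ F.card := by
    rw [hcardF]
    calc 400 ≤ n := hn
      _ = 1 * n := (one_mul n).symm
      _ ≤ ℓ * n := Nat.mul_le_mul_right n hℓ1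
  refine le_trans (aux_prob k n F m hmR hN) (measure_mono ?_)
  intro H hH
  exact aux_construct k n ℓ hℓ1 hℓk H hH
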